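/- The function g(x) = x^{x-2}·(x-1)^{1-x} is strictly decreasing on the interval (2, ∞); in particular, p^{p-2}·(p-1)^{1-p} ≤ 1 for every real p ≥ 2. -/

import Mathlib

private noncomputable def fAux (x : ℝ) : ℝ := (x - 2) * Real.log x + (1 - x) * Real.log (x - 1)

private lemma fAux_strictAntiOn : StrictAntiOn fAux (Set.Ici 2) := by
  apply strictAntiOn_of_deriv_neg (convex_Ici 2)
  · apply ContinuousOn.add
    · exact (continuousOn_id.sub continuousOn_const).mul
        (Real.continuousOn_log.comp continuousOn_id (fun x hx => by
          simp only [Set.mem_Ici] at hx; simp; linarith))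
    · exact (continuousOn_const.sub continuousOn_id).mul
        ((Real.continuousOn_log.comp (continuousOn_id.sub continuousOn_const)
          (fun x hx => by simp only [Set.mem_Ici] at hx; simp; intro h; linarith)))
  · intro x hx
    rw [interior_Ici] at hx
    simp only [Set.mem_Ioi] at hx
    have hx0 : (0:ℝ) < x := by linarith
    have hx1 : (0:ℝ) < x - 1 := by linarith
    have h1 : HasDerivAt (fun x : ℝ => (x - 2) * Real.log x)
        (1 * Real.log x + (x - 2) * x⁻¹) x :=
      ((hasDerivAt_id x).sub_const 2).mul (Real.hasDerivAt_log hx0.ne')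
    have hlog1 : HasDerivAt (fun x : ℝ => Real.log (x - 1)) ((x - 1)⁻¹ * 1) x :=
      (Real.hasDerivAt_log hx1.ne').comp (h₂ := Real.log) x ((hasDerivAt_id x).sub_const 1)
    have h2 : HasDerivAt (fun x : ℝ => (1 - x) * Real.log (x - 1))
        ((0 - 1) * Real.log (x - 1) + (1 - x) * ((x - 1)⁻¹ * 1)) x :=
      ((hasDerivAt_const x 1).sub (hasDerivAt_id x)).mul hlog1
    have hf : HasDerivAt fAux
        (1 * Real.log x + (x - 2) * x⁻¹ +
          ((0 - 1) * Real.log (x - 1) + (1 - x) * ((x - 1)⁻¹ * 1))) x := h1.add h2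
    rw [hf.deriv]
    have hratio : Real.log x - Real.log (x - 1) < (x - 1)⁻¹ := by
      rw [← Real.log_div hx0.ne' hx1.ne']
      have hpos : 0 < x / (x - 1) := div_pos hx0 hx1
      have hne : x / (x - 1) ≠ 1 := by
        intro h
        rw [div_eq_one_iff_eq hx1.ne'] at h
        linarith
      have := Real.log_lt_sub_one_of_pos hpos hne
      have heq : x / (x - 1) - 1 = (x - 1)⁻¹ := by
        field_simp
        ring
      linarith [heq ▸ this]
    have hle : (x - 1)⁻¹ < 2 / x := by
      rw [inv_eq_one_div, div_lt_div_iff₀ hx1 hx0]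
      linarith
    have hxd : (x - 2) * x⁻¹ = 1 - 2 / x := by
      field_simp
    have h1x : (1 - x) * ((x - 1)⁻¹ * 1) = -1 := by
      field_simp
      ring
    rw [hxd, h1x]
    nlinarith

private lemma g_eq (x : ℝ) (hx : x ∈ Set.Ici (2:ℝ)) :
    x ^ (x - 2) * (x - 1) ^ (1 - x) = Real.exp (fAux x) := by
  simp only [Set.mem_Ici] at hx
  have hx0 : (0:ℝ) < x := by linarith
  have hx1 : (0:ℝ) < x - 1 := by linarith
  rw [Real.rpow_def_of_pos hx0, Real.rpow_def_of_pos hx1, ← Real.exp_add, fAux]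
  ring_nf

private lemma g_strictAntiOn :
    StrictAntiOn (fun x : ℝ => x ^ (x - 2) * (x - 1) ^ (1 - x)) (Set.Ici 2) := by
  intro a ha b hb hab
  simp only
  rw [g_eq a ha, g_eq b hb]
  exact Real.exp_lt_exp.mpr (fAux_strictAntiOn ha hb hab)

/-- The function `x ↦ x^(x-2) (x-1)^(1-x)` is strictly decreasing on `(2, ∞)`;
in particular `p^(p-2) (p-1)^(1-p) ≤ 1` for all `p ≥ 2`. -/
theorem stmt1 :
    StrictAntiOn (fun x : ℝ => x ^ (x - 2) * (x - 1) ^ (1 - x)) (Set.Ioi 2) ∧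
    ∀ p : ℝ, 2 ≤ p → p ^ (p - 2) * (p - 1) ^ (1 - p) ≤ 1 := by
  constructor
  · exact g_strictAntiOn.mono Set.Ioi_subset_Ici_self
  · intro p hp
    have h2 : (2:ℝ) ^ ((2:ℝ) - 2) * ((2:ℝ) - 1) ^ ((1:ℝ) - 2) = 1 := by
      norm_num
    rcases eq_or_lt_of_le hp with h | h
    · rw [← h]; norm_num
    · have := g_strictAntiOn (Set.mem_Ici.mpr le_rfl) (Set.mem_Ici.mpr hp) h
      simp only at this
      rw [h2] at this
      exact this.le
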